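/- Every vertex decomposable pure simplicial complex is shellable. (First implication of Theorem 1.4.) -/
import Mathlib


open Finset

/-- The least possible number of `(k-1)`-element sets in the shadow of a family
of `n` distinct `k`-element sets. -/
noncomputable def minShadow (n k : ℕ) : ℕ :=
  sInf {m | ∃ U : Finset (Finset ℕ),
    U.card = n ∧ (∀ A ∈ U, A.card = k) ∧ (Finset.shadow U).card = m}

/-- A (finite abstract) simplicial complex: a nonempty family of finite sets
closed under taking subsets. -/
def IsComplex (Δ : Finset (Finset ℕ)) : Prop :=
  Δ.Nonempty ∧ ∀ σ ∈ Δ, ∀ τ ⊆ σ, τ ∈ Δ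

/-- The facets (maximal faces) of `Δ`. -/
def facets (Δ : Finset (Finset ℕ)) : Finset (Finset ℕ) :=
  Δ.filter fun σ => ∀ τ ∈ Δ, σ ⊆ τ → σ = τ

/-- `Δ` is pure of dimension `d`: every facet has `d + 1` elements. -/
def IsPureDim (Δ : Finset (Finset ℕ)) (d : ℕ) : Prop :=
  ∀ σ ∈ facets Δ, σ.card = d + 1

/-- `Δ` is pure: all facets have the same number of elements. -/
def IsPure (Δ : Finset (Finset ℕ)) : Prop :=
  ∃ k, ∀ σ ∈ facets Δ, σ.card = k

/-- The link of the vertex `x` in `Δ`: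
`lk_Δ(x) = {τ ∈ Δ : x ∉ τ and τ ∪ {x} ∈ Δ}`. -/
def link (Δ : Finset (Finset ℕ)) (x : ℕ) : Finset (Finset ℕ) :=
  Δ.filter fun τ => x ∉ τ ∧ insert x τ ∈ Δ

/-- The deletion of the vertex `x` from `Δ`: `Δ ∖ x = {τ ∈ Δ : x ∉ τ}`. -/
def deletion (Δ : Finset (Finset ℕ)) (x : ℕ) : Finset (Finset ℕ) :=
  Δ.filter fun τ => x ∉ τ

/-- `Δ` is an extremal complex of dimension `d`: it is a pure simplicial complex
of dimension `d` whose number of `d`-element faces is the least possible among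
all families of `(facets Δ).card` sets of size `d + 1`. -/
def IsExtremal (Δ : Finset (Finset ℕ)) (d : ℕ) : Prop :=
  IsComplex Δ ∧ IsPureDim Δ d ∧
  (Δ.filter fun σ => σ.card = d).card = minShadow (facets Δ).card (d + 1)

/-- Vertex decomposability of a pure simplicial complex: either `Δ` consists only
of the empty face, or `Δ` is a single vertex, or some vertex `x` has both link and
deletion pure and vertex decomposable. -/
inductive VertexDecomposable : Finset (Finset ℕ) → Prop
  | emptyFace : VertexDecomposable {∅}
  | point (x : ℕ) : VertexDecomposable {∅, {x}}
  | step (Δ : Finset (Finset ℕ)) (x : ℕ) (hx : {x} ∈ Δ)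
      (hl₁ : IsPure (link Δ x)) (hl₂ : VertexDecomposable (link Δ x))
      (hd₁ : IsPure (deletion Δ x)) (hd₂ : VertexDecomposable (deletion Δ x)) :
      VertexDecomposable Δ

/-- Shellability of a pure simplicial complex: the facets can be ordered
`F 0, F 1, …, F (n-1)` so that for each `j ≥ 1` and each `i < j` there is
`i' < j` with `|F j ∩ F i'| = |F j| - 1` and `F j ∩ F i ⊆ F j ∩ F i'`. -/
def IsShellable (Δ : Finset (Finset ℕ)) : Prop :=
  ∃ (n : ℕ) (F : ℕ → Finset ℕ),
    facets Δ = (Finset.range n).image F ∧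
    (∀ i < n, ∀ j < n, F i = F j → i = j) ∧
    ∀ j, 1 ≤ j → j < n → ∀ i < j, ∃ i' < j,
      (F j ∩ F i').card = (F j).card - 1 ∧ F j ∩ F i ⊆ F j ∩ F i'

lemma mem_facets' {Δ : Finset (Finset ℕ)} {σ : Finset ℕ} :
    σ ∈ facets Δ ↔ σ ∈ Δ ∧ ∀ τ ∈ Δ, σ ⊆ τ → σ = τ := by
  simp [facets]

lemma empty_mem_of_complex {Δ : Finset (Finset ℕ)} (h : IsComplex Δ) : ∅ ∈ Δ := by
  obtain ⟨σ, hσ⟩ := h.1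
  exact h.2 σ hσ ∅ (Finset.empty_subset σ)

lemma exists_facet {Δ : Finset (Finset ℕ)} {σ : Finset ℕ} (hσ : σ ∈ Δ) :
    ∃ F ∈ facets Δ, σ ⊆ F := by
  obtain ⟨F, hF, hmax⟩ := (Δ.filter (σ ⊆ ·)).exists_max_image Finset.card
    ⟨σ, by simp [hσ]⟩
  simp only [mem_filter] at hF hmax
  refine ⟨F, mem_facets'.2 ⟨hF.1, ?_⟩, hF.2⟩
  intro τ hτ hFτ
  exact Finset.eq_of_subset_of_card_le hFτ (hmax τ ⟨hτ, hF.2.trans hFτ⟩)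

lemma link_isComplex {Δ : Finset (Finset ℕ)} (h : IsComplex Δ) {x : ℕ} (hx : {x} ∈ Δ) :
    IsComplex (link Δ x) := by
  constructor
  · refine ⟨∅, ?_⟩
    simp only [link, mem_filter]
    refine ⟨empty_mem_of_complex h, by simp, ?_⟩
    simpa using hx
  · intro σ hσ τ hτ
    simp only [link, mem_filter] at hσ ⊢
    exact ⟨h.2 σ hσ.1 τ hτ, fun hxτ => hσ.2.1 (hτ hxτ),
      h.2 _ hσ.2.2 _ (Finset.insert_subset_insert x hτ)⟩

lemma deletion_isComplex {Δ : Finset (Finset ℕ)} (h : IsComplex Δ) {x : ℕ} :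
    IsComplex (deletion Δ x) := by
  constructor
  · exact ⟨∅, by simp [deletion, empty_mem_of_complex h]⟩
  · intro σ hσ τ hτ
    simp only [deletion, mem_filter] at hσ ⊢
    exact ⟨h.2 σ hσ.1 τ hτ, fun hxτ => hσ.2 (hτ hxτ)⟩

lemma facet_link_iff {Δ : Finset (Finset ℕ)} (h : IsComplex Δ) {x : ℕ} {G : Finset ℕ} :
    G ∈ facets (link Δ x) ↔ x ∉ G ∧ insert x G ∈ facets Δ := by
  constructor
  · intro hG
    obtain ⟨hG1, hG2⟩ := mem_facets'.1 hG
    simp only [link, mem_filter] at hG1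
    refine ⟨hG1.2.1, mem_facets'.2 ⟨hG1.2.2, ?_⟩⟩
    intro τ hτ hsub
    have hτe : τ.erase x ∈ link Δ x := by
      simp only [link, mem_filter]
      have hxτ : x ∈ τ := hsub (Finset.mem_insert_self x G)
      refine ⟨h.2 τ hτ _ (Finset.erase_subset _ _), Finset.notMem_erase _ _, ?_⟩
      rwa [Finset.insert_erase hxτ]
    have hGτe : G ⊆ τ.erase x := by
      rw [Finset.subset_erase]
      exact ⟨(Finset.subset_insert x G).trans hsub, hG1.2.1⟩
    have := hG2 _ hτe hGτe
    rw [this, Finset.insert_erase (hsub (Finset.mem_insert_self x G))]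
  · rintro ⟨hxG, hF⟩
    obtain ⟨hF1, hF2⟩ := mem_facets'.1 hF
    refine mem_facets'.2 ⟨?_, ?_⟩
    · simp only [link, mem_filter]
      exact ⟨h.2 _ hF1 G (Finset.subset_insert x G), hxG, hF1⟩
    · intro τ hτ hGτ
      simp only [link, mem_filter] at hτ
      have := hF2 _ hτ.2.2 (Finset.insert_subset_insert x hGτ)
      have h2 : Finset.erase (insert x G) x = Finset.erase (insert x τ) x := by rw [this]
      rwa [Finset.erase_insert hxG, Finset.erase_insert hτ.2.1] at h2

lemma facet_deletion {Δ : Finset (Finset ℕ)} {x : ℕ} {F : Finset ℕ}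
    (hF : F ∈ facets Δ) (hxF : x ∉ F) : F ∈ facets (deletion Δ x) := by
  obtain ⟨hF1, hF2⟩ := mem_facets'.1 hF
  refine mem_facets'.2 ⟨by simp [deletion, hF1, hxF], ?_⟩
  intro τ hτ
  exact hF2 τ (mem_filter.1 hτ).1

lemma facet_card_pos {Γ : Finset (Finset ℕ)} {A B : Finset ℕ}
    (hA : A ∈ facets Γ) (hB : B ∈ facets Γ) (hne : A ≠ B) : 0 < A.card := by
  rcases Finset.eq_empty_or_nonempty A with h | h
  · subst h
    exact absurd ((mem_facets'.1 hA).2 B (mem_facets'.1 hB).1 (Finset.empty_subset B)) hne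
  · exact Finset.card_pos.2 h
/-- Every vertex decomposable pure simplicial complex is shellable. -/
theorem vertexDecomposable_shellable (Δ : Finset (Finset ℕ))
    (h₁ : IsComplex Δ) (h₂ : IsPure Δ) (h₃ : VertexDecomposable Δ) :
    IsShellable Δ := by
  revert h₁ h₂
  induction h₃ with
  | emptyFace =>
    intro _ _
    refine ⟨1, fun _ => ∅, ?_, ?_, ?_⟩
    · ext σ
      simp only [facets, mem_filter, Finset.mem_singleton, Finset.mem_image,
        Finset.mem_range]
      constructor
      · rintro ⟨rfl, _⟩; exact ⟨0, by omega, rfl⟩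
      · rintro ⟨m, -, rfl⟩
        exact ⟨rfl, by rintro τ rfl -; rfl⟩
    · intro i hi j hj _; omega
    · intro j hj1 hjn; omega
  | point x =>
    intro _ _
    refine ⟨1, fun _ => {x}, ?_, ?_, ?_⟩
    · ext σ
      simp only [facets, mem_filter, Finset.mem_insert, Finset.mem_singleton,
        Finset.mem_image, Finset.mem_range]
      constructor
      · rintro ⟨rfl | rfl, h⟩
        · exact absurd (h {x} (Or.inr rfl) (Finset.empty_subset _))
            (Finset.singleton_ne_empty x).symm
        · exact ⟨0, by omega, rfl⟩
      · rintro ⟨m, -, rfl⟩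
        refine ⟨Or.inr rfl, ?_⟩
        rintro τ (rfl | rfl) hsub
        · exact absurd (hsub (Finset.mem_singleton_self x)) (by simp)
        · rfl
    · intro i hi j hj _; omega
    · intro j hj1 hjn; omega
  | step Δ x hx hl₁ hl₂ hd₁ hd₂ ihl ihd =>
    clear hl₂ hd₂
    intro h₁ h₂
    have hlc : IsComplex (link Δ x) := link_isComplex h₁ hx
    have hdc : IsComplex (deletion Δ x) := deletion_isComplex h₁
    obtain ⟨n₂, F₂, hF₂eq, hF₂inj, hF₂sh⟩ := ihl hlc hl₁
    have hF₂mem : ∀ m < n₂, F₂ m ∈ facets (link Δ x) := by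
      intro m hm
      rw [hF₂eq]
      exact Finset.mem_image.2 ⟨m, Finset.mem_range.2 hm, rfl⟩
    have hF₂x : ∀ m < n₂, x ∉ F₂ m := by
      intro m hm
      have := (mem_facets'.1 (hF₂mem m hm)).1
      simp only [link, mem_filter] at this
      exact this.2.1
    by_cases hc : ∀ F ∈ facets Δ, x ∈ F
    · -- cone case
      have hfac : facets Δ = (facets (link Δ x)).image (insert x) := by
        ext F
        simp only [Finset.mem_image]
        constructor
        · intro hF
          refine ⟨F.erase x, (facet_link_iff h₁).2
            ⟨Finset.notMem_erase _ _, by rwa [Finset.insert_erase (hc F hF)]⟩,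
            Finset.insert_erase (hc F hF)⟩
        · rintro ⟨G, hG, rfl⟩
          exact ((facet_link_iff h₁).1 hG).2
      refine ⟨n₂, fun j => insert x (F₂ j), ?_, ?_, ?_⟩
      · rw [hfac, hF₂eq, Finset.image_image]
        rfl
      · intro i hi j hj heq
        apply hF₂inj i hi j hj
        have heq' : insert x (F₂ i) = insert x (F₂ j) := heq
        have h2 : Finset.erase (insert x (F₂ i)) x = Finset.erase (insert x (F₂ j)) x := by
          rw [heq']
        rwa [Finset.erase_insert (hF₂x i hi), Finset.erase_insert (hF₂x j hj)] at h2
      · intro j hj1 hjn i hij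
        obtain ⟨i', hi', hcard, hsub⟩ := hF₂sh j hj1 hjn i hij
        have hi'n : i' < n₂ := hi'.trans hjn
        have hne : F₂ j ≠ F₂ i' := fun h => by
          have := hF₂inj j hjn i' hi'n h; omega
        have hpos : 0 < (F₂ j).card :=
          facet_card_pos (hF₂mem j hjn) (hF₂mem i' hi'n) hne
        refine ⟨i', hi', ?_, ?_⟩
        · rw [← Finset.insert_inter_distrib,
            Finset.card_insert_of_notMem (fun h => hF₂x j hjn (Finset.mem_inter.1 h).1),
            Finset.card_insert_of_notMem (hF₂x j hjn), hcard]
          omega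
        · rw [← Finset.insert_inter_distrib, ← Finset.insert_inter_distrib]
          exact Finset.insert_subset_insert x hsub
    · -- general case
      push_neg at hc
      obtain ⟨F₀, hF₀, hxF₀⟩ := hc
      obtain ⟨n₁, F₁, hF₁eq, hF₁inj, hF₁sh⟩ := ihd hdc hd₁
      have hF₁mem : ∀ m < n₁, F₁ m ∈ facets (deletion Δ x) := by
        intro m hm
        rw [hF₁eq]
        exact Finset.mem_image.2 ⟨m, Finset.mem_range.2 hm, rfl⟩
      have hF₁x : ∀ m < n₁, x ∉ F₁ m := by
        intro m hm
        have := (mem_facets'.1 (hF₁mem m hm)).1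
        simp only [deletion, mem_filter] at this
        exact this.2
      -- every facet of the deletion is a facet of Δ
      have hdelfac : ∀ G ∈ facets (deletion Δ x), G ∈ facets Δ := by
        intro G hG
        obtain ⟨hGdel, hGmax⟩ := mem_facets'.1 hG
        have hGΔ : G ∈ Δ := (mem_filter.1 hGdel).1
        have hxG : x ∉ G := (mem_filter.1 hGdel).2
        obtain ⟨F, hF, hGF⟩ := exists_facet hGΔ
        by_cases hxF : x ∈ F
        · exfalso
          have hFe : F.erase x ∈ deletion Δ x := by
            simp only [deletion, mem_filter]
            exact ⟨h₁.2 F (mem_facets'.1 hF).1 _ (Finset.erase_subset _ _),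
              Finset.notMem_erase _ _⟩
          have hGeq : G = F.erase x :=
            hGmax _ hFe (Finset.subset_erase.2 ⟨hGF, hxG⟩)
          obtain ⟨k, hk⟩ := h₂
          obtain ⟨k', hk'⟩ := hd₁
          have h1 : F.card = k := hk F hF
          have h2 : F₀.card = k := hk F₀ hF₀
          have h3 : F₀.card = k' := hk' F₀ (facet_deletion hF₀ hxF₀)
          have h4 : G.card = k' := hk' G hG
          have h5 : G.card = F.card - 1 := by
            rw [hGeq, Finset.card_erase_of_mem hxF]
          have h6 : 0 < F.card := Finset.card_pos.2 ⟨x, hxF⟩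
          omega
        · have hFdel : F ∈ facets (deletion Δ x) := facet_deletion hF hxF
          have : G = F := hGmax F (mem_facets'.1 hFdel).1 hGF
          rw [this]; exact hF
      have hfac : facets Δ =
          facets (deletion Δ x) ∪ (facets (link Δ x)).image (insert x) := by
        ext F
        simp only [Finset.mem_union, Finset.mem_image]
        constructor
        · intro hF
          by_cases hxF : x ∈ F
          · exact Or.inr ⟨F.erase x, (facet_link_iff h₁).2
              ⟨Finset.notMem_erase _ _, by rwa [Finset.insert_erase hxF]⟩,
              Finset.insert_erase hxF⟩
          · exact Or.inl (facet_deletion hF hxF)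
        · rintro (h | ⟨G, hG, rfl⟩)
          · exact hdelfac _ h
          · exact ((facet_link_iff h₁).1 hG).2
      classical
      refine ⟨n₁ + n₂, fun j => if j < n₁ then F₁ j else insert x (F₂ (j - n₁)),
        ?_, ?_, ?_⟩
      · ext F
        rw [hfac, hF₁eq, hF₂eq]
        simp only [Finset.mem_union, Finset.mem_image, Finset.mem_range]
        constructor
        · rintro (⟨m, hm, rfl⟩ | ⟨G, ⟨m, hm, rfl⟩, rfl⟩)
          · exact ⟨m, by omega, by simp [hm]⟩
          · refine ⟨n₁ + m, by omega, ?_⟩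
            simp only [if_neg (by omega : ¬ n₁ + m < n₁)]
            rw [show n₁ + m - n₁ = m by omega]
        · rintro ⟨m, hm, rfl⟩
          by_cases hmn : m < n₁
          · exact Or.inl ⟨m, hmn, by simp [hmn]⟩
          · refine Or.inr ⟨F₂ (m - n₁), ⟨m - n₁, by omega, rfl⟩, by simp [hmn]⟩
      · intro i hi j hj heq
        by_cases hin : i < n₁ <;> by_cases hjn : j < n₁ <;>
          simp only [if_pos, if_neg, hin, hjn, if_true, if_false] at heq
        · exact hF₁inj i hin j hjn heq
        · exact absurd (heq ▸ Finset.mem_insert_self x (F₂ (j - n₁))) (hF₁x i hin)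
        · exact absurd (heq ▸ Finset.mem_insert_self x (F₂ (i - n₁))) (hF₁x j hjn)
        · have hi2 : i - n₁ < n₂ := by omega
          have hj2 : j - n₁ < n₂ := by omega
          have h2 : Finset.erase (insert x (F₂ (i - n₁))) x
              = Finset.erase (insert x (F₂ (j - n₁))) x := by rw [heq]
          rw [Finset.erase_insert (hF₂x _ hi2), Finset.erase_insert (hF₂x _ hj2)] at h2
          have := hF₂inj _ hi2 _ hj2 h2
          omega
      · intro j hj1 hjn i hij
        by_cases hjn₁ : j < n₁
        · have hin₁ : i < n₁ := hij.trans hjn₁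
          obtain ⟨i', hi', hcard, hsub⟩ := hF₁sh j hj1 hjn₁ i hij
          have hi'n : i' < n₁ := hi'.trans hjn₁
          refine ⟨i', hi', ?_, ?_⟩
          · simp only [if_pos hjn₁, if_pos hi'n]
            exact hcard
          · simp only [if_pos hjn₁, if_pos hi'n, if_pos hin₁]
            exact hsub
        · push_neg at hjn₁
          have ha : j - n₁ < n₂ := by omega
          set A := F₂ (j - n₁) with hA
          have hAfac : A ∈ facets (link Δ x) := hF₂mem _ ha
          have hxA : x ∉ A := hF₂x _ ha
          by_cases hin₁ : i < n₁
          · -- mixed case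
            have hAdel : A ∈ deletion Δ x := by
              have := (mem_facets'.1 hAfac).1
              simp only [link, mem_filter] at this
              simp only [deletion, mem_filter]
              exact ⟨this.1, this.2.1⟩
            obtain ⟨H, hH, hAH⟩ := exists_facet hAdel
            rw [hF₁eq] at hH
            obtain ⟨i₀, hi₀, hHi₀⟩ := Finset.mem_image.1 hH
            rw [Finset.mem_range] at hi₀
            have hxH : x ∉ H := hHi₀ ▸ hF₁x i₀ hi₀
            refine ⟨i₀, by omega, ?_, ?_⟩
            · simp only [if_neg (by omega : ¬ j < n₁), if_pos hi₀, hHi₀]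
              rw [Finset.insert_inter_of_notMem hxH,
                Finset.inter_eq_left.2 hAH,
                Finset.card_insert_of_notMem hxA]
              omega
            · simp only [if_neg (by omega : ¬ j < n₁), if_pos hi₀, if_pos hin₁, hHi₀]
              rw [Finset.insert_inter_of_notMem hxH,
                Finset.inter_eq_left.2 hAH,
                Finset.insert_inter_of_notMem (hF₁x i hin₁)]
              exact Finset.inter_subset_left
          · -- both in second block
            push_neg at hin₁
            have hb : i - n₁ < j - n₁ := by omega
            have hb1 : 1 ≤ j - n₁ := by omega
            obtain ⟨b', hb', hcard, hsub⟩ := hF₂sh (j - n₁) hb1 ha (i - n₁) hb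
            rw [← hA] at hcard hsub
            have hb'n : b' < n₂ := hb'.trans ha
            have hne : A ≠ F₂ b' := fun h => by
              have := hF₂inj (j - n₁) ha b' hb'n h; omega
            have hpos : 0 < A.card :=
              facet_card_pos hAfac (hF₂mem b' hb'n) hne
            refine ⟨b' + n₁, by omega, ?_, ?_⟩
            · simp only [if_neg (by omega : ¬ j < n₁),
                if_neg (by omega : ¬ b' + n₁ < n₁),
                (by omega : b' + n₁ - n₁ = b')]
              rw [← Finset.insert_inter_distrib,
                Finset.card_insert_of_notMem (fun h => hxA (Finset.mem_inter.1 h).1),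
                Finset.card_insert_of_notMem hxA]
              omega
            · simp only [if_neg (by omega : ¬ j < n₁),
                if_neg (by omega : ¬ b' + n₁ < n₁),
                if_neg (by omega : ¬ i < n₁),
                (by omega : b' + n₁ - n₁ = b')]
              rw [← Finset.insert_inter_distrib, ← Finset.insert_inter_distrib]
              exact Finset.insert_subset_insert x hsub
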